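/- (Strictly passive behaviours always admit a unique maximum power transfer point) Let P be a finite set, E := (P → ℝ) × (P → ℝ), and let V ⊆ E be a strictly passive subspace. Let σ(V^⊥) := {(x,y) ∈ E : (y,x) ∈ V^⊥}. Then V ∩ σ(V^⊥) = {0} and V + σ(V^⊥) = E; consequently, for every a ∈ E the affine set A := a + V contains exactly one point (v₀,i₀) with (i₀,v₀) ∈ V^⊥, i.e. the stationarity (maximum power transfer) condition is always satisfiable on A and its solution is unique. -/

import Mathlib

noncomputable section

open scoped BigOperators

/-- The power `⟨v,i⟩ = Σ_{e∈P} v(e)·i(e)` of a port vector `(v,i)`. -/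
def power {P : Type*} [Fintype P] (x : (P → ℝ) × (P → ℝ)) : ℝ :=
  ∑ e, x.1 e * x.2 e

/-- The inner product on `E = (P → ℝ) × (P → ℝ)`. -/
def ipE {P : Type*} [Fintype P] (x y : (P → ℝ) × (P → ℝ)) : ℝ :=
  (∑ e, x.1 e * y.1 e) + ∑ e, x.2 e * y.2 e

/-- Orthogonal complement in `E` with respect to `ipE`. -/
def perpE {P : Type*} [Fintype P] (K : Set ((P → ℝ) × (P → ℝ))) :
    Set ((P → ℝ) × (P → ℝ)) :=
  {y | ∀ x ∈ K, ipE x y = 0}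

/-- The swap `σ(K) := {(x,y) : (y,x) ∈ K}`. -/
def swapSet {P : Type*} (K : Set ((P → ℝ) × (P → ℝ))) : Set ((P → ℝ) × (P → ℝ)) :=
  {z | (z.2, z.1) ∈ K}

/-- For a strictly passive subspace `V`, `V ∩ σ(V^⊥) = {0}` and `V + σ(V^⊥) = E`;
consequently every affine set `a + V` contains exactly one point `(v₀,i₀)` with
`(i₀,v₀) ∈ V^⊥`. -/
def eqE (P : Type*) [Fintype P] :
    ((P → ℝ) × (P → ℝ)) ≃ₗ[ℝ] WithLp 2 (EuclideanSpace ℝ P × EuclideanSpace ℝ P) :=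
  (LinearEquiv.prodCongr (WithLp.linearEquiv 2 ℝ (P → ℝ)).symm
    (WithLp.linearEquiv 2 ℝ (P → ℝ)).symm).trans (WithLp.linearEquiv 2 ℝ _).symm

lemma ipE_eq_inner {P : Type*} [Fintype P] (x y : (P → ℝ) × (P → ℝ)) :
    ipE x y = inner ℝ (eqE P x) (eqE P y) := by
  simp [ipE, eqE, WithLp.prod_inner_apply, PiLp.inner_apply, RCLike.inner_apply,
    mul_comm]

/-- swapped perp as a submodule -/
def Wsub {P : Type*} [Fintype P] (V : Submodule ℝ ((P → ℝ) × (P → ℝ))) :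
    Submodule ℝ ((P → ℝ) × (P → ℝ)) :=
  (((V.map (eqE P).toLinearMap)ᗮ).comap (eqE P).toLinearMap).comap
    (LinearEquiv.prodComm ℝ (P → ℝ) (P → ℝ)).toLinearMap

lemma mem_perpE_iff {P : Type*} [Fintype P] (V : Submodule ℝ ((P → ℝ) × (P → ℝ)))
    (x : (P → ℝ) × (P → ℝ)) :
    x ∈ perpE (V : Set ((P → ℝ) × (P → ℝ))) ↔
      eqE P x ∈ (V.map (eqE P).toLinearMap)ᗮ := by
  constructor
  · intro h u hu
    obtain ⟨v, hv, rfl⟩ := hu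
    show inner ℝ ((eqE P) v) ((eqE P) x) = (0 : ℝ)
    rw [← ipE_eq_inner]
    exact h v hv
  · intro h v hv
    rw [ipE_eq_inner]
    exact h (eqE P v) ⟨v, hv, rfl⟩

lemma Wsub_coe {P : Type*} [Fintype P] (V : Submodule ℝ ((P → ℝ) × (P → ℝ))) :
    (Wsub V : Set ((P → ℝ) × (P → ℝ))) = swapSet (perpE (V : Set ((P → ℝ) × (P → ℝ)))) := by
  ext z
  simp only [Wsub, Submodule.mem_comap, SetLike.mem_coe, swapSet, Set.mem_setOf_eq]
  rw [mem_perpE_iff V (z.2, z.1)]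
  rfl


theorem stmt17 (P : Type*) [Fintype P]
    (V : Submodule ℝ ((P → ℝ) × (P → ℝ)))
    (hpass : ∀ y ∈ V, 0 ≤ power y)
    (hstrict : ∀ y ∈ V, y ≠ 0 → 0 < power y) :
    ((V : Set ((P → ℝ) × (P → ℝ))) ∩ swapSet (perpE (V : Set ((P → ℝ) × (P → ℝ))))
        = {0})
    ∧ ({z : (P → ℝ) × (P → ℝ) | ∃ u ∈ V,
          ∃ w ∈ swapSet (perpE (V : Set ((P → ℝ) × (P → ℝ)))), z = u + w}
        = Set.univ)
    ∧ ∀ a : (P → ℝ) × (P → ℝ),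
        ∃! x : (P → ℝ) × (P → ℝ),
          x - a ∈ V ∧ (x.2, x.1) ∈ perpE (V : Set ((P → ℝ) × (P → ℝ))) := by
  set W := Wsub V with hW
  -- intersection is trivial
  have hinf : V ⊓ W = ⊥ := by
    rw [eq_bot_iff]
    intro z hz
    have hzV : z ∈ V := hz.1
    have hzW : (z.2, z.1) ∈ perpE (V : Set ((P → ℝ) × (P → ℝ))) := by
      have h' : z ∈ (Wsub V : Set ((P → ℝ) × (P → ℝ))) := hz.2
      rw [Wsub_coe] at h'
      exact h'
    have h0 : ipE z (z.2, z.1) = 0 := hzW z hzV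
    have hp : power z = 0 := by
      have : (2 : ℝ) * power z = 0 := by
        rw [← h0]; simp [ipE, power, mul_comm]; ring
      linarith
    by_contra hne
    have := hstrict z hzV (by simpa using hne)
    rw [hp] at this; exact lt_irrefl 0 this
  -- dimension count
  have hrank : Module.finrank ℝ V + Module.finrank ℝ W =
      Module.finrank ℝ ((P → ℝ) × (P → ℝ)) := by
    have h1 : Module.finrank ℝ W = Module.finrank ℝ (V.map (eqE P).toLinearMap)ᗮ := by
      rw [hW, Wsub]
      rw [Submodule.comap_equiv_eq_map_symm, Submodule.comap_equiv_eq_map_symm]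
      rw [LinearEquiv.finrank_map_eq, LinearEquiv.finrank_map_eq]
    have h2 : Module.finrank ℝ (V.map (eqE P).toLinearMap) = Module.finrank ℝ V :=
      LinearEquiv.finrank_map_eq _ _
    have h3 := Submodule.finrank_add_finrank_orthogonal (K := V.map (eqE P).toLinearMap)
    have h4 : Module.finrank ℝ (WithLp 2 (EuclideanSpace ℝ P × EuclideanSpace ℝ P)) =
        Module.finrank ℝ ((P → ℝ) × (P → ℝ)) := (LinearEquiv.finrank_eq (eqE P)).symm
    omega
  have hsup : V ⊔ W = ⊤ := by
    apply Submodule.eq_top_of_finrank_eq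
    have := Submodule.finrank_sup_add_finrank_inf_eq V W
    rw [hinf] at this
    simp [finrank_bot] at this
    omega
  refine ⟨?_, ?_, ?_⟩
  · rw [← Wsub_coe, ← Submodule.coe_inf, ← hW, hinf]
    simp
  · ext z
    simp only [Set.mem_setOf_eq, Set.mem_univ, iff_true]
    have : z ∈ V ⊔ W := by rw [hsup]; trivial
    obtain ⟨u, hu, w, hw, rfl⟩ := Submodule.mem_sup.mp this
    exact ⟨u, hu, w, by rwa [← SetLike.mem_coe, Wsub_coe] at hw, rfl⟩
  · intro a
    have ha : a ∈ V ⊔ W := by rw [hsup]; trivial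
    obtain ⟨u, hu, w, hw, hsum⟩ := Submodule.mem_sup.mp ha
    have hwperp : (w.2, w.1) ∈ perpE (V : Set ((P → ℝ) × (P → ℝ))) := by
      rwa [← SetLike.mem_coe, Wsub_coe] at hw
    refine ⟨w, ⟨?_, hwperp⟩, ?_⟩
    · have : w - a = -u := by rw [← hsum]; abel
      rw [this]; exact V.neg_mem hu
    · intro x ⟨hx1, hx2⟩
      have hxW : x ∈ W := by
        rw [← SetLike.mem_coe, Wsub_coe]; exact hx2
      have hwW : w ∈ W := hw
      have hdiff : x - w ∈ V ⊓ W := by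
        constructor
        · have : x - w = (x - a) - (w - a) := by abel
          rw [this]
          refine V.sub_mem hx1 ?_
          have : w - a = -u := by rw [← hsum]; abel
          rw [this]; exact V.neg_mem hu
        · exact W.sub_mem hxW hwW
      rw [hinf] at hdiff
      have : x - w = 0 := hdiff
      linear_combination (norm := module) this
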